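/- Let a and b be commuting orientation-preserving homeomorphisms of ℝ (equivalently, order-automorphisms of ℝ). Suppose a fixes some point x₀ ∈ ℝ and that no point of ℝ is fixed by both a and b. Then the orbit {bⁿ(x₀) : n ∈ ℤ} is unbounded above and unbounded below, and b has no fixed point in ℝ. -/

import Mathlib

private lemma zpow_apply_eq_comp (b : ℝ ≃o ℝ) (n : ℤ) (x : ℝ) :
    (b ^ (1 + n)) x = b ((b ^ n) x) := by
  rw [zpow_add, zpow_one]; rfl

private lemma fixed_zpow {b : ℝ ≃o ℝ} {x : ℝ} (h : b x = x) (n : ℤ) :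
    (b ^ n) x = x := by
  induction n using Int.induction_on with
  | zero => rfl
  | succ k ih =>
    have : (1 : ℤ) + k = k + 1 := by ring
    rw [← this, zpow_apply_eq_comp, ih, h]
  | pred k ih =>
    have hb : b ((b ^ (-(k : ℤ) - 1)) x) = (b ^ (-(k : ℤ))) x := by
      rw [← zpow_apply_eq_comp]; norm_num
    rw [ih] at hb
    have : b ((b ^ (-(k : ℤ) - 1)) x) = b x := by rw [hb, h]
    have h2 : (b ^ (-(k : ℤ) - 1)) x = x := b.injective this
    calc (b ^ (-(k : ℤ) - 1)) x = x := h2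

/-- If a and b are commuting orientation-preserving homeomorphisms
(order-automorphisms) of ℝ, a fixes x₀, and no point is fixed by both a and b,
then the b-orbit of x₀ is unbounded above and below, and b is fixed-point free. -/
theorem stmt_3 (a b : ℝ ≃o ℝ) (hcomm : ∀ x : ℝ, a (b x) = b (a x))
    (x₀ : ℝ) (hfix : a x₀ = x₀)
    (hnofix : ∀ x : ℝ, a x = x → b x = x → False) :
    ¬ BddAbove (Set.range fun n : ℤ => (b ^ n) x₀) ∧
    ¬ BddBelow (Set.range fun n : ℤ => (b ^ n) x₀) ∧
    ∀ x : ℝ, b x ≠ x := by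
  set S : Set ℝ := Set.range fun n : ℤ => (b ^ n) x₀ with hS
  have hne : S.Nonempty := ⟨x₀, ⟨0, rfl⟩⟩
  -- a commutes with b^n
  have hab : a * b = b * a := by
    ext x; exact hcomm x
  have hcommn : ∀ n : ℤ, ∀ x : ℝ, a ((b ^ n) x) = (b ^ n) (a x) := by
    intro n x
    have h := (Commute.zpow_right (hab : Commute a b) n).symm
    calc a ((b ^ n) x) = (a * b ^ n) x := rfl
      _ = (b ^ n * a) x := by rw [h]
      _ = (b ^ n) (a x) := rfl
  -- a fixes every point of S
  have haS : ∀ y ∈ S, a y = y := by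
    rintro y ⟨n, rfl⟩
    simp only
    rw [hcommn n x₀, hfix]
  have haimg : a '' S = S := by
    apply Set.eq_of_subset_of_subset
    · rintro y ⟨z, hz, rfl⟩; rwa [haS z hz]
    · intro y hy; exact ⟨y, hy, haS y hy⟩
  -- b maps S onto S
  have hbimg : b '' S = S := by
    apply Set.eq_of_subset_of_subset
    · rintro y ⟨z, ⟨n, rfl⟩, rfl⟩
      exact ⟨1 + n, (zpow_apply_eq_comp b n x₀)⟩
    · rintro y ⟨n, rfl⟩
      exact ⟨(b ^ (n - 1)) x₀, ⟨n - 1, rfl⟩, by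
        rw [← zpow_apply_eq_comp]; norm_num⟩
  have hNA : ¬ BddAbove S := by
    intro hbdd
    have hb' : b (sSup S) = sSup S := by
      rw [b.map_csSup' hne hbdd, hbimg]
    have ha' : a (sSup S) = sSup S := by
      rw [a.map_csSup' hne hbdd, haimg]
    exact hnofix _ ha' hb'
  have hNB : ¬ BddBelow S := by
    intro hbdd
    have hb' : b (sInf S) = sInf S := by
      rw [b.map_csInf' hne hbdd, hbimg]
    have ha' : a (sInf S) = sInf S := by
      rw [a.map_csInf' hne hbdd, haimg]
    exact hnofix _ ha' hb'
  refine ⟨hNA, hNB, ?_⟩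
  intro x hx
  rcases le_total x₀ x with h | h
  · apply hNA
    refine ⟨x, ?_⟩
    rintro y ⟨n, rfl⟩
    calc (b ^ n) x₀ ≤ (b ^ n) x := (b ^ n).monotone h
      _ = x := fixed_zpow hx n
  · apply hNB
    refine ⟨x, ?_⟩
    rintro y ⟨n, rfl⟩
    calc x = (b ^ n) x := (fixed_zpow hx n).symm
      _ ≤ (b ^ n) x₀ := (b ^ n).monotone h
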